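/- Let A and B be commutative rings equipped with ℕ-gradings 𝒜 and ℬ (each a GradedRing structure), let f : A → B be a ring homomorphism mapping 𝒜 i into ℬ i for every i ∈ ℕ, let C be a torsion-free abelian group, and let g : B → C be an additive homomorphism such that every element b of the degree-2 component ℬ 2 with g(b) = 0 is the image under f of some element of the degree-2 component 𝒜 2. Let n ≥ 2 be a natural number and assume the degree-2n component 𝒜 (2n) is the zero subgroup. Then every torsion element b of ℬ 2 satisfies b^n = 0 in B. -/
import Mathlib


/-- Algebraic content of Lemma 2.3 (case `dim M = 5`): given a graded ring
homomorphism `f : A →+* B`, a torsion-free abelian group `C`, and an additive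
map `g : B →+ C` such that every degree-2 element of `B` killed by `g` lifts to
a degree-2 element of `A`, if `n ≥ 2` and the degree-`2n` component of `A`
vanishes, then every torsion element `b` of the degree-2 component of `B`
satisfies `b^n = 0`. -/
theorem torsion_degree_two_pow_eq_zero
    {A B C : Type*} [CommRing A] [CommRing B] [AddCommGroup C]
    (𝒜 : ℕ → AddSubgroup A) (ℬ : ℕ → AddSubgroup B)
    [GradedRing 𝒜] [GradedRing ℬ]
    (f : A →+* B) (hf : ∀ i : ℕ, ∀ a ∈ 𝒜 i, f a ∈ ℬ i)
    (hCtf : ∀ (m : ℤ), m ≠ 0 → ∀ c : C, m • c = 0 → c = 0)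
    (g : B →+ C)
    (hlift : ∀ b ∈ ℬ 2, g b = 0 → ∃ a ∈ 𝒜 2, f a = b)
    (n : ℕ) (hn : 2 ≤ n) (hvanish : 𝒜 (2 * n) = ⊥) :
    ∀ b ∈ ℬ 2, (∃ m : ℤ, m ≠ 0 ∧ m • b = 0) → b ^ n = 0 := by
  intro b hb ⟨m, hm, hmb⟩
  have hgb : g b = 0 := hCtf m hm (g b) (by rw [← map_zsmul, hmb, map_zero])
  obtain ⟨a, ha, hab⟩ := hlift b hb hgb
  have hpow : a ^ n ∈ 𝒜 (2 * n) := by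
    have := SetLike.pow_mem_graded n ha
    simpa [mul_comm] using this
  rw [hvanish] at hpow
  have : a ^ n = 0 := hpow
  calc b ^ n = f (a ^ n) := by rw [map_pow, hab]
    _ = 0 := by rw [this, map_zero]
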